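/- Fix real numbers β and M and an integer n ≥ 0. For ε ∈ ℝ, ε ≠ 0, set q = −e^{ε}, b = −e^{βε}, and define A_n^{(2)}(ε) = M(q−1) q^{3(2−n)−1} (1 − q^{−2}) (q^{n−2};q)_5 (bq^n;q)_1 / (q;q)_2. Then as ε → 0 (ε ≠ 0), A_n^{(2)}(ε)/ε^3 tends to 8M n(n+2)(n−2) if n is even, and to −8M(n+1)(n−1)(n+β) if n is odd. -/

import Mathlib

/-- The q-shifted factorial `(a;q)_n = ∏_{k=0}^{n-1} (1 - a q^k)`. -/
noncomputable def qPoch (q a : ℝ) (n : ℕ) : ℝ :=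
  ∏ k ∈ Finset.range n, (1 - a * q ^ k)

lemma exp_zpow' (ε : ℝ) (m : ℤ) : (Real.exp ε) ^ m = Real.exp (m * ε) := by
  rw [← Real.rpow_intCast, Real.rpow_def_of_pos (Real.exp_pos ε), Real.log_exp, mul_comm]

lemma neg_exp_zpow (ε : ℝ) (m : ℤ) : (-Real.exp ε) ^ m = (-1) ^ m * Real.exp (m * ε) := by
  rw [← exp_zpow', ← mul_zpow, neg_one_mul]

lemma neg_exp_pow (ε : ℝ) (k : ℕ) : (-Real.exp ε) ^ k = (-1) ^ k * Real.exp (k * ε) := by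
  rw [Real.exp_nat_mul, neg_pow]

open Filter in
lemma slope_lim (c : ℝ) :
    Tendsto (fun ε : ℝ => (1 - Real.exp (c * ε)) / ε)
      (nhdsWithin 0 ({0}ᶜ : Set ℝ)) (nhds (-c)) := by
  have hd : HasDerivAt (fun ε : ℝ => 1 - Real.exp (c * ε)) (-c) 0 := by
    have h1 : HasDerivAt (fun ε : ℝ => c * ε) c 0 := by
      simpa using (hasDerivAt_id (0:ℝ)).const_mul c
    have h2 := (Real.hasDerivAt_exp (c * 0)).comp 0 h1
    have h3 := (hasDerivAt_const (0:ℝ) (1:ℝ)).sub h2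
    exact h3.congr_deriv (by simp)
  have h4 := hasDerivAt_iff_tendsto_slope.mp hd
  refine h4.congr (fun ε => ?_)
  simp [slope_def_field]

open Filter in
lemma combo (A : ℝ → ℝ) (A0 u1 u2 u3 L : ℝ)
    (hA : Tendsto A (nhdsWithin 0 ({0}ᶜ : Set ℝ)) (nhds A0))
    (hL : L = A0 * 2 * -u1 * -u2 * -u3 / (-2)) :
    Tendsto (fun ε : ℝ => A ε * ((1 - Real.exp ((-2) * ε)) / ε) * ((1 - Real.exp (u1 * ε)) / ε) *
      ((1 - Real.exp (u2 * ε)) / ε) * ((1 - Real.exp (u3 * ε)) / ε) / ((1 - Real.exp (2 * ε)) / ε))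
      (nhdsWithin 0 ({0}ᶜ : Set ℝ)) (nhds L) := by
  subst hL
  have h := ((((hA.mul (slope_lim (-2))).mul (slope_lim u1)).mul (slope_lim u2)).mul
      (slope_lim u3)).div (slope_lim 2) (by norm_num)
  convert h using 2
  · rfl
  ring

set_option maxHeartbeats 1000000

lemma key_eq {C1 den a b c d e N x : ℝ} (hx : x ≠ 0) (hden : den ≠ 0) (he : e ≠ 0)
    (hN : N = C1 * a * b * c * d) :
    C1 / den * (a / x) * (b / x) * (c / x) * (d / x) / (e / x) = N / (den * e) / x ^ 3 := by
  subst hN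
  field_simp

/-- The `q → −1` limit of `A_n^{(2)}/ε³` under the parametrization
`q = −e^ε`, `b = −e^{βε}`, where
`A_n^{(2)} = M(q−1) q^{3(2−n)−1} (1−q^{−2}) (q^{n−2};q)_5 (bq^n;q)_1 / (q;q)_2`:
the limit is `8Mn(n+2)(n−2)` for even `n` and `−8M(n+1)(n−1)(n+β)` for odd `n`. -/
theorem A2_limit (β M : ℝ) (n : ℕ) :
    Filter.Tendsto
      (fun ε : ℝ =>
        (let q : ℝ := -Real.exp ε
         let b : ℝ := -Real.exp (β * ε)
         M * (q - 1) * q ^ (3 * (2 - (n : ℤ)) - 1) * (1 - q ^ (-2 : ℤ)) *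
           qPoch q (q ^ ((n : ℤ) - 2)) 5 * qPoch q (b * q ^ n) 1 / qPoch q q 2) / ε ^ 3)
      (nhdsWithin 0 ({0}ᶜ : Set ℝ))
      (nhds (if Even n then
          8 * M * n * (n + 2) * ((n : ℝ) - 2)
        else
          -8 * M * (n + 1) * ((n : ℝ) - 1) * (n + β))) := by
  rcases Nat.even_or_odd n with h | h
  · rw [if_pos h]
    obtain ⟨m, rfl⟩ := h
    have hA : Filter.Tendsto (fun ε : ℝ =>
        M * (-Real.exp ε - 1) * (-Real.exp ((3 * (2 - ((m + m : ℕ):ℝ)) - 1) * ε)) *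
          (1 + Real.exp ((((m + m : ℕ):ℝ) - 2 + 1) * ε)) *
          (1 + Real.exp ((((m + m : ℕ):ℝ) - 2 + 3) * ε)) *
          (1 + Real.exp (β * ε + ((m + m : ℕ):ℝ) * ε)) / (1 + Real.exp ε))
        (nhdsWithin 0 ({0}ᶜ : Set ℝ)) (nhds (8 * M)) := by
      have hc : ContinuousAt (fun ε : ℝ =>
          M * (-Real.exp ε - 1) * (-Real.exp ((3 * (2 - ((m + m : ℕ):ℝ)) - 1) * ε)) *
            (1 + Real.exp ((((m + m : ℕ):ℝ) - 2 + 1) * ε)) *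
            (1 + Real.exp ((((m + m : ℕ):ℝ) - 2 + 3) * ε)) *
            (1 + Real.exp (β * ε + ((m + m : ℕ):ℝ) * ε)) / (1 + Real.exp ε)) 0 := by
        apply ContinuousAt.div
        · fun_prop
        · fun_prop
        · norm_num [Real.exp_zero]
      have ht := hc.tendsto.mono_left (nhdsWithin_le_nhds (s := ({0}ᶜ : Set ℝ)))
      convert ht using 2
      norm_num [Real.exp_zero]
      try ring
    have hcombo := combo _ (8 * M) (((m + m : ℕ):ℝ) - 2 + 0) (((m + m : ℕ):ℝ) - 2 + 2)
      (((m + m : ℕ):ℝ) - 2 + 4)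
      (8 * M * ((m + m : ℕ):ℝ) * (((m + m : ℕ):ℝ) + 2) * (((m + m : ℕ):ℝ) - 2)) hA (by ring)
    refine Filter.Tendsto.congr' ?_ hcombo
    refine Filter.eventuallyEq_of_mem self_mem_nhdsWithin fun ε hε => ?_
    have hε : ε ≠ 0 := hε
    have hq : (-Real.exp ε : ℝ) ≠ 0 := neg_ne_zero.mpr (Real.exp_ne_zero ε)
    have hk : ∀ k : ℕ, (-Real.exp ε) ^ (((m + m : ℕ):ℤ) - 2) * (-Real.exp ε) ^ k
        = (-1:ℝ) ^ (((m + m : ℕ):ℤ) - 2 + (k:ℤ)) *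
          Real.exp (((((m + m : ℕ):ℤ) - 2 + (k:ℤ)) : ℤ) * ε) := by
      intro k
      rw [← zpow_natCast (-Real.exp ε) k, ← zpow_add₀ hq, neg_exp_zpow]
    have s1 : (-1:ℝ) ^ (3 * (2 - ((m + m : ℕ):ℤ)) - 1) = -1 :=
      Odd.neg_one_zpow ⟨2 - 3 * m, by push_cast; ring⟩
    have s2 : (-1:ℝ) ^ (-2 : ℤ) = 1 := by norm_num
    have s30 : (-1:ℝ) ^ (((m + m : ℕ):ℤ) - 2 + ((0:ℕ):ℤ)) = 1 :=
      Even.neg_one_zpow ⟨(m:ℤ) - 1, by push_cast; ring⟩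
    have s31 : (-1:ℝ) ^ (((m + m : ℕ):ℤ) - 2 + ((1:ℕ):ℤ)) = -1 :=
      Odd.neg_one_zpow ⟨(m:ℤ) - 1, by push_cast; ring⟩
    have s32 : (-1:ℝ) ^ (((m + m : ℕ):ℤ) - 2 + ((2:ℕ):ℤ)) = 1 :=
      Even.neg_one_zpow ⟨(m:ℤ), by push_cast; ring⟩
    have s33 : (-1:ℝ) ^ (((m + m : ℕ):ℤ) - 2 + ((3:ℕ):ℤ)) = -1 :=
      Odd.neg_one_zpow ⟨(m:ℤ), by push_cast; ring⟩
    have s34 : (-1:ℝ) ^ (((m + m : ℕ):ℤ) - 2 + ((4:ℕ):ℤ)) = 1 :=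
      Even.neg_one_zpow ⟨(m:ℤ) + 1, by push_cast; ring⟩
    have s4 : (-1:ℝ) ^ (m + m) = 1 := Even.neg_one_pow ⟨m, rfl⟩
    have hexp2 : -Real.exp ε * -Real.exp ε = Real.exp (ε + ε) := by
      rw [neg_mul_neg, ← Real.exp_add]
    have hne1 : (1:ℝ) + Real.exp ε ≠ 0 := by positivity
    have hexp_one : ∀ x : ℝ, Real.exp x = 1 → x = 0 := fun x hx =>
      Real.exp_injective (by simpa using hx)
    have hne2 : (1:ℝ) - Real.exp (ε + ε) ≠ 0 := sub_ne_zero.mpr fun hcon =>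
      hε (by have := hexp_one _ hcon.symm; linarith)
    show _ = _
    simp only [qPoch, Finset.prod_range_succ, Finset.prod_range_zero, one_mul]
    rw [hk 0, hk 1, hk 2, hk 3, hk 4, neg_exp_zpow ε (3 * (2 - ((m + m : ℕ):ℤ)) - 1),
      neg_exp_zpow ε (-2 : ℤ), neg_exp_pow ε (m + m)]
    rw [s1, s2, s30, s31, s32, s33, s34, s4]
    simp only [pow_zero, pow_one, mul_one, one_mul, neg_one_mul]
    rw [hexp2]
    rw [show (-Real.exp (β * ε)) * Real.exp (((m + m : ℕ):ℝ) * ε)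
        = -Real.exp (β * ε + ((m + m : ℕ):ℝ) * ε) by rw [neg_mul, ← Real.exp_add]]
    rw [show (2:ℝ) * ε = ε + ε by ring, show (1:ℝ) - -Real.exp ε = 1 + Real.exp ε by ring]
    exact key_eq hε hne1 hne2 (by push_cast; ring)
  · rw [if_neg (Nat.not_even_iff_odd.mpr h)]
    obtain ⟨m, rfl⟩ := h
    have hA : Filter.Tendsto (fun ε : ℝ =>
        M * (-Real.exp ε - 1) * (Real.exp ((3 * (2 - ((2 * m + 1 : ℕ):ℝ)) - 1) * ε)) *
          (1 + Real.exp ((((2 * m + 1 : ℕ):ℝ) - 2) * ε)) *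
          (1 + Real.exp ((((2 * m + 1 : ℕ):ℝ) - 2 + 2) * ε)) *
          (1 + Real.exp ((((2 * m + 1 : ℕ):ℝ) - 2 + 4) * ε)) / (1 + Real.exp ε))
        (nhdsWithin 0 ({0}ᶜ : Set ℝ)) (nhds (-8 * M)) := by
      have hc : ContinuousAt (fun ε : ℝ =>
          M * (-Real.exp ε - 1) * (Real.exp ((3 * (2 - ((2 * m + 1 : ℕ):ℝ)) - 1) * ε)) *
            (1 + Real.exp ((((2 * m + 1 : ℕ):ℝ) - 2) * ε)) *
            (1 + Real.exp ((((2 * m + 1 : ℕ):ℝ) - 2 + 2) * ε)) *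
            (1 + Real.exp ((((2 * m + 1 : ℕ):ℝ) - 2 + 4) * ε)) / (1 + Real.exp ε)) 0 := by
        apply ContinuousAt.div
        · fun_prop
        · fun_prop
        · norm_num [Real.exp_zero]
      have ht := hc.tendsto.mono_left (nhdsWithin_le_nhds (s := ({0}ᶜ : Set ℝ)))
      convert ht using 2
      norm_num [Real.exp_zero]
      try ring
    have hcombo := combo _ (-8 * M) (((2 * m + 1 : ℕ):ℝ) - 2 + 1) (((2 * m + 1 : ℕ):ℝ) - 2 + 3)
      (β + ((2 * m + 1 : ℕ):ℝ))
      (-8 * M * (((2 * m + 1 : ℕ):ℝ) + 1) * (((2 * m + 1 : ℕ):ℝ) - 1) *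
        (((2 * m + 1 : ℕ):ℝ) + β)) hA (by ring)
    refine Filter.Tendsto.congr' ?_ hcombo
    refine Filter.eventuallyEq_of_mem self_mem_nhdsWithin fun ε hε => ?_
    have hε : ε ≠ 0 := hε
    have hq : (-Real.exp ε : ℝ) ≠ 0 := neg_ne_zero.mpr (Real.exp_ne_zero ε)
    have hk : ∀ k : ℕ, (-Real.exp ε) ^ (((2 * m + 1 : ℕ):ℤ) - 2) * (-Real.exp ε) ^ k
        = (-1:ℝ) ^ (((2 * m + 1 : ℕ):ℤ) - 2 + (k:ℤ)) *
          Real.exp (((((2 * m + 1 : ℕ):ℤ) - 2 + (k:ℤ)) : ℤ) * ε) := by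
      intro k
      rw [← zpow_natCast (-Real.exp ε) k, ← zpow_add₀ hq, neg_exp_zpow]
    have s1 : (-1:ℝ) ^ (3 * (2 - ((2 * m + 1 : ℕ):ℤ)) - 1) = 1 :=
      Even.neg_one_zpow ⟨1 - 3 * m, by push_cast; ring⟩
    have s2 : (-1:ℝ) ^ (-2 : ℤ) = 1 := by norm_num
    have s30 : (-1:ℝ) ^ (((2 * m + 1 : ℕ):ℤ) - 2 + ((0:ℕ):ℤ)) = -1 :=
      Odd.neg_one_zpow ⟨(m:ℤ) - 1, by push_cast; ring⟩
    have s31 : (-1:ℝ) ^ (((2 * m + 1 : ℕ):ℤ) - 2 + ((1:ℕ):ℤ)) = 1 :=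
      Even.neg_one_zpow ⟨(m:ℤ), by push_cast; ring⟩
    have s32 : (-1:ℝ) ^ (((2 * m + 1 : ℕ):ℤ) - 2 + ((2:ℕ):ℤ)) = -1 :=
      Odd.neg_one_zpow ⟨(m:ℤ), by push_cast; ring⟩
    have s33 : (-1:ℝ) ^ (((2 * m + 1 : ℕ):ℤ) - 2 + ((3:ℕ):ℤ)) = 1 :=
      Even.neg_one_zpow ⟨(m:ℤ) + 1, by push_cast; ring⟩
    have s34 : (-1:ℝ) ^ (((2 * m + 1 : ℕ):ℤ) - 2 + ((4:ℕ):ℤ)) = -1 :=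
      Odd.neg_one_zpow ⟨(m:ℤ) + 1, by push_cast; ring⟩
    have s4 : (-1:ℝ) ^ (2 * m + 1) = -1 := Odd.neg_one_pow ⟨m, rfl⟩
    have hexp2 : -Real.exp ε * -Real.exp ε = Real.exp (ε + ε) := by
      rw [neg_mul_neg, ← Real.exp_add]
    have hne1 : (1:ℝ) + Real.exp ε ≠ 0 := by positivity
    have hexp_one : ∀ x : ℝ, Real.exp x = 1 → x = 0 := fun x hx =>
      Real.exp_injective (by simpa using hx)
    have hne2 : (1:ℝ) - Real.exp (ε + ε) ≠ 0 := sub_ne_zero.mpr fun hcon =>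
      hε (by have := hexp_one _ hcon.symm; linarith)
    show _ = _
    simp only [qPoch, Finset.prod_range_succ, Finset.prod_range_zero, one_mul]
    rw [hk 0, hk 1, hk 2, hk 3, hk 4, neg_exp_zpow ε (3 * (2 - ((2 * m + 1 : ℕ):ℤ)) - 1),
      neg_exp_zpow ε (-2 : ℤ), neg_exp_pow ε (2 * m + 1)]
    rw [s1, s2, s30, s31, s32, s33, s34, s4]
    simp only [pow_zero, pow_one, mul_one, one_mul, neg_one_mul]
    rw [hexp2]
    rw [show (-Real.exp (β * ε)) * -Real.exp (((2 * m + 1 : ℕ):ℝ) * ε)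
        = Real.exp (β * ε + ((2 * m + 1 : ℕ):ℝ) * ε) by rw [neg_mul_neg, ← Real.exp_add]]
    rw [show β * ε + ((2 * m + 1 : ℕ):ℝ) * ε = (β + ((2 * m + 1 : ℕ):ℝ)) * ε by ring]
    rw [show (2:ℝ) * ε = ε + ε by ring, show (1:ℝ) - -Real.exp ε = 1 + Real.exp ε by ring]
    exact key_eq hε hne1 hne2 (by set_option maxRecDepth 10000 in push_cast [add_zero]; ring)
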